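/- In the 29-voter election over {a,b,c,d} with 2 voters a≻b≻c≻d, 2 voters a≻c≻d≻b, 1 voter a≻b≻d≻c, 8 voters b≻c≻a≻d, 8 voters c≻d≻a≻b, and 8 voters d≻b≻a≻c, the deletion score of candidate a is at least 12: no set of at most 11 voters can be deleted so that a becomes the Condorcet winner of the remaining election. -/

import Mathlib

/-- Number of voters preferring `a` to `b`. -/
noncomputable def countPref {V C : Type*} [Fintype V] (O : V → C → C → Prop) (a b : C) : ℕ :=
  Nat.card {i : V // O i a b}

/-- `c` is a Condorcet winner: a strict majority of voters prefers `c` to every other candidate. -/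
def IsCondorcetWinner {V C : Type*} [Fintype V] (O : V → C → C → Prop) (c : C) : Prop :=
  ∀ b : C, b ≠ c → Fintype.card V < 2 * countPref O c b

/-- Candidates `a=0`, `b=1`, `c=2`, `d=3`. The ballot (ranking, best first) of each of
the 29 voters: 2 voters a≻b≻c≻d, 2 voters a≻c≻d≻b, 1 voter a≻b≻d≻c, 8 voters b≻c≻a≻d,
8 voters c≻d≻a≻b, and 8 voters d≻b≻a≻c. -/
def theBallot (i : Fin 29) : List (Fin 4) :=
  if i.val < 2 then [0, 1, 2, 3]
  else if i.val < 4 then [0, 2, 3, 1]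
  else if i.val < 5 then [0, 1, 3, 2]
  else if i.val < 13 then [1, 2, 0, 3]
  else if i.val < 21 then [2, 3, 0, 1]
  else [3, 1, 0, 2]

/-- The preference profile of the 29-voter election: voter `i` prefers `x` to `y` iff
`x` occurs before `y` on voter `i`'s ballot. -/
def theProfile (i : Fin 29) (x y : Fin 4) : Prop :=
  (theBallot i).idxOf x < (theBallot i).idxOf y

/-- `c` becomes the Condorcet winner after changing the votes of at most `k` voters. -/
def ReplacementScoreLE (c : Fin 4) (k : ℕ) : Prop :=
  ∃ O' : Fin 29 → Fin 4 → Fin 4 → Prop,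
    (∀ i, IsStrictTotalOrder (Fin 4) (O' i)) ∧
    Nat.card {i : Fin 29 // O' i ≠ theProfile i} ≤ k ∧
    IsCondorcetWinner O' c

/-- `c` is the Condorcet winner after deleting the voters in `D`. -/
def WinsAfterDeleting (D : Finset (Fin 29)) (c : Fin 4) : Prop :=
  IsCondorcetWinner (fun i : {i : Fin 29 // i ∉ D} => theProfile i.1) c

/-- the deletion score of candidate `a` (candidate 0) is at least 12: no
set of at most 11 voters can be deleted so that `a` becomes the Condorcet winner. -/

instance instDecProfile (i : Fin 29) (x y : Fin 4) : Decidable (theProfile i x y) :=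
  Nat.decLt _ _

open Finset in
/-- The five voters ranking `a` first. -/
def G0 : Finset (Fin 29) := univ.filter (fun i => i.val < 5)
open Finset in
def Gb : Finset (Fin 29) := univ.filter (fun i => 5 ≤ i.val ∧ i.val < 13)
open Finset in
def Gc : Finset (Fin 29) := univ.filter (fun i => 13 ≤ i.val ∧ i.val < 21)
open Finset in
def Gd : Finset (Fin 29) := univ.filter (fun i => 21 ≤ i.val)

open Finset in
lemma countPref_eq (D : Finset (Fin 29)) (r : Fin 4) :
    countPref (fun i : {i : Fin 29 // i ∉ D} => theProfile i.1) 0 r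
      = ((univ.filter (fun i => theProfile i 0 r)) \ D).card := by
  rw [countPref, Nat.card_congr (Equiv.subtypeSubtypeEquivSubtypeInter
      (fun i : Fin 29 => i ∉ D) (fun i => theProfile i 0 r)),
    Nat.card_eq_fintype_card, Fintype.card_subtype]
  congr 1
  ext i
  simp [and_comm]

open Finset in
lemma key (D : Finset (Fin 29)) (s t : Finset (Fin 29)) (hst : Disjoint s t)
    (hcard : (s ∪ t).card = 13) :
    ((s ∪ t) \ D).card + (s ∩ D).card + (t ∩ D).card = 13 := by
  have h1 : ((s ∪ t) ∩ D).card + ((s ∪ t) \ D).card = (s ∪ t).card :=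
    Finset.card_inter_add_card_sdiff _ _
  have h2 : (s ∪ t) ∩ D = (s ∩ D) ∪ (t ∩ D) := Finset.union_inter_distrib_right ..
  have h3 : ((s ∩ D) ∪ (t ∩ D)).card = (s ∩ D).card + (t ∩ D).card :=
    Finset.card_union_of_disjoint (hst.mono inter_subset_left inter_subset_left)
  rw [h2, h3] at h1
  omega

theorem stmt17 :
    ∀ D : Finset (Fin 29), D.card ≤ 11 → ¬ WinsAfterDeleting D 0 := by
  intro D hD h
  open Finset in
  have hcard : Fintype.card {i : Fin 29 // i ∉ D} = 29 - D.card := by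
    rw [Fintype.card_subtype]
    have : univ.filter (fun i => i ∉ D) = Dᶜ := by ext i; simp
    rw [this, card_compl]
    simp
  have hA1 : Finset.univ.filter (fun i => theProfile i 0 1) = G0 ∪ Gc := by decide
  have hA2 : Finset.univ.filter (fun i => theProfile i 0 2) = G0 ∪ Gd := by decide
  have hA3 : Finset.univ.filter (fun i => theProfile i 0 3) = G0 ∪ Gb := by decide
  have d0b : Disjoint G0 Gb := by
    rw [Finset.disjoint_left]; intro a ha hb; simp [G0, Gb] at ha hb; omega
  have d0c : Disjoint G0 Gc := by
    rw [Finset.disjoint_left]; intro a ha hb; simp [G0, Gc] at ha hb; omega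
  have d0d : Disjoint G0 Gd := by
    rw [Finset.disjoint_left]; intro a ha hb; simp [G0, Gd] at ha hb; omega
  have h1 := h 1 (by decide)
  have h2 := h 2 (by decide)
  have h3 := h 3 (by decide)
  rw [countPref_eq, hA1, hcard] at h1
  rw [countPref_eq, hA2, hcard] at h2
  rw [countPref_eq, hA3, hcard] at h3
  have k1 := key D G0 Gc d0c (by decide)
  have k2 := key D G0 Gd d0d (by decide)
  have k3 := key D G0 Gb d0b (by decide)
  have hpart : D.card = (G0 ∩ D).card + (Gb ∩ D).card + (Gc ∩ D).card + (Gd ∩ D).card := by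
    open Finset in
    have hunion : (G0 ∩ D) ∪ (Gb ∩ D) ∪ (Gc ∩ D) ∪ (Gd ∩ D) = D := by
      ext i
      have := i.isLt
      by_cases hi : i ∈ D <;> simp [hi, G0, Gb, Gc, Gd] <;> omega
    have dbc : Disjoint Gb Gc := by
      rw [Finset.disjoint_left]; intro a ha hb; simp [Gb, Gc] at ha hb; omega
    have dbd : Disjoint Gb Gd := by
      rw [Finset.disjoint_left]; intro a ha hb; simp [Gb, Gd] at ha hb; omega
    have dcd : Disjoint Gc Gd := by
      rw [Finset.disjoint_left]; intro a ha hb; simp [Gc, Gd] at ha hb; omega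
    have j1 : Disjoint (G0 ∩ D) (Gb ∩ D) :=
      d0b.mono inter_subset_left inter_subset_left
    have j2 : Disjoint ((G0 ∩ D) ∪ (Gb ∩ D)) (Gc ∩ D) :=
      Finset.disjoint_union_left.mpr
        ⟨d0c.mono inter_subset_left inter_subset_left,
         dbc.mono inter_subset_left inter_subset_left⟩
    have j3 : Disjoint ((G0 ∩ D) ∪ (Gb ∩ D) ∪ (Gc ∩ D)) (Gd ∩ D) :=
      Finset.disjoint_union_left.mpr
        ⟨Finset.disjoint_union_left.mpr
          ⟨d0d.mono inter_subset_left inter_subset_left,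
           dbd.mono inter_subset_left inter_subset_left⟩,
         dcd.mono inter_subset_left inter_subset_left⟩
    have e : ((G0 ∩ D) ∪ (Gb ∩ D) ∪ (Gc ∩ D) ∪ (Gd ∩ D)).card
        = (G0 ∩ D).card + (Gb ∩ D).card + (Gc ∩ D).card + (Gd ∩ D).card := by
      rw [Finset.card_union_of_disjoint j3, Finset.card_union_of_disjoint j2,
        Finset.card_union_of_disjoint j1]
    rw [hunion] at e
    exact e
  omega
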